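/- Let H be a complex Hilbert space, K : H → H compact with I + K injective, and let (Kₙ) be a sequence of bounded linear operators on H such that: (i) Kₙ x → K x for every x ∈ H, and (ii) the family {Kₙ} is collectively compact, i.e. the set {Kₙ x : n ∈ ℕ, ‖x‖ ≤ 1} is relatively compact. Then there exists N such that for all n ≥ N the operator I + Kₙ is invertible, and the inverses (I + Kₙ)⁻¹ are uniformly bounded in operator norm. -/

import Mathlib

open Filter

section Aux
variable {H : Type*} [NormedAddCommGroup H] [InnerProductSpace ℂ H] [CompleteSpace H]

lemma aux_norm_unit {z : H} (hz0 : z ≠ 0) : ‖(‖z‖:ℂ)⁻¹ • z‖ = 1 := by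
  have hnz : ‖z‖ ≠ 0 := norm_ne_zero_iff.mpr hz0
  rw [norm_smul, norm_inv, Complex.norm_real, norm_norm]
  field_simp

/-- A compact perturbation of the identity which is injective is bounded below. -/
lemma aux_bounded_below (K : H →L[ℂ] H) (hK : IsCompactOperator ⇑K)
    (hinj : ∀ z : H, z + K z = 0 → z = 0) :
    ∃ c > (0:ℝ), ∀ z : H, c * ‖z‖ ≤ ‖z + K z‖ := by
  by_contra hcon
  push_neg at hcon
  have key : ∀ n : ℕ, ∃ u : H, ‖u‖ = 1 ∧ ‖u + K u‖ < 1 / (n + 1) := by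
    intro n
    obtain ⟨z, hz⟩ := hcon (1 / (n + 1)) (by positivity)
    have hz0 : z ≠ 0 := by rintro rfl; simp at hz
    have hnz : ‖z‖ ≠ 0 := norm_ne_zero_iff.mpr hz0
    refine ⟨(‖z‖:ℂ)⁻¹ • z, aux_norm_unit hz0, ?_⟩
    have h1 : (‖z‖:ℂ)⁻¹ • z + K ((‖z‖:ℂ)⁻¹ • z) = (‖z‖:ℂ)⁻¹ • (z + K z) := by
      rw [map_smul, smul_add]
    rw [h1, norm_smul, norm_inv, Complex.norm_real, norm_norm]
    rw [inv_mul_lt_iff₀ (lt_of_le_of_ne (norm_nonneg z) (Ne.symm hnz))]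
    linarith [hz]
  choose u hu1 hu2 using key
  obtain ⟨V, hV, hVc⟩ := (isCompactOperator_iff_exists_mem_nhds_isCompact_closure_image ⇑K).mp hK
  obtain ⟨r, hr, hrV⟩ := Metric.mem_nhds_iff.mp hV
  set w : ℕ → H := fun n => ((r/2 : ℝ) : ℂ) • u n with hw
  have hwV : ∀ n, w n ∈ V := by
    intro n
    apply hrV
    rw [Metric.mem_ball, dist_zero_right, hw]
    simp only [norm_smul, Complex.norm_real, norm_norm, hu1, mul_one]
    rw [Real.norm_eq_abs, abs_of_nonneg (by linarith)]
    linarith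
  have hmem : ∀ n, K (w n) ∈ closure (⇑K '' V) := fun n =>
    subset_closure ⟨w n, hwV n, rfl⟩
  obtain ⟨b, -, φ, hφ, hconv⟩ := hVc.tendsto_subseq hmem
  have hr2 : ((r/2 : ℝ) : ℂ) ≠ 0 := by
    simp only [ne_eq, Complex.ofReal_eq_zero]; positivity
  have hKu : Tendsto (fun k => K (u (φ k))) atTop (nhds (((r/2:ℝ):ℂ)⁻¹ • b)) := by
    have h2 : ∀ k, K (u (φ k)) = ((r/2:ℝ):ℂ)⁻¹ • K (w (φ k)) := by
      intro k; rw [hw]; simp only [map_smul, inv_smul_smul₀ hr2]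
    simp only [h2]
    exact hconv.const_smul _
  set a : H := ((r/2:ℝ):ℂ)⁻¹ • b with ha
  have hsum : Tendsto (fun k => u (φ k) + K (u (φ k))) atTop (nhds 0) := by
    rw [tendsto_iff_norm_sub_tendsto_zero]
    apply squeeze_zero (fun k => by positivity) (g := fun k : ℕ => 1 / (k + 1))
      (fun k => ?_) tendsto_one_div_add_atTop_nhds_zero_nat
    rw [sub_zero]
    show ‖u (φ k) + K (u (φ k))‖ ≤ 1 / (k + 1)
    have h3 : (1 : ℝ) / (φ k + 1) ≤ 1 / (k + 1) := by
      apply one_div_le_one_div_of_le (by positivity)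
      have h4 : k ≤ φ k := hφ.le_apply
      have : (k:ℝ) ≤ (φ k : ℝ) := Nat.cast_le.mpr h4
      linarith
    exact (hu2 (φ k)).le.trans h3
  have huconv : Tendsto (fun k => u (φ k)) atTop (nhds (-a)) := by
    have : (fun k => u (φ k)) = fun k => (u (φ k) + K (u (φ k))) - K (u (φ k)) := by
      funext k; abel
    rw [this]
    simpa using hsum.sub hKu
  have hKa : Tendsto (fun k => K (u (φ k))) atTop (nhds (K (-a))) :=
    (K.continuous.tendsto _).comp huconv
  have haK : K (-a) = a := tendsto_nhds_unique hKa hKu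
  have hna : ‖(-a : H)‖ = 1 := by
    have : Tendsto (fun k => ‖u (φ k)‖) atTop (nhds ‖(-a : H)‖) :=
      (continuous_norm.tendsto _).comp huconv
    simp only [hu1] at this
    exact (tendsto_const_nhds_iff.mp this).symm
  have : (-a : H) = 0 := hinj _ (by rw [haK]; abel)
  rw [this] at hna
  simp at hna

lemma aux_surjective (K : H →L[ℂ] H) (hK : IsCompactOperator ⇑K)
    (hinj : ∀ z : H, z + K z = 0 → z = 0)
    {c : ℝ} (hc : 0 < c) (hlow : ∀ z : H, c * ‖z‖ ≤ ‖z + K z‖) :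
    Function.Surjective ⇑((1 : H →L[ℂ] H) + K) := by
  set A : H →L[ℂ] H := 1 + K with hA
  have hAz : ∀ z, A z = z + K z := fun z => rfl
  intro y₀
  by_contra hy
  push_neg at hy
  have hy' : ∀ z, A z ≠ y₀ := hy
  -- powers are bounded below
  have hpow : ∀ (n : ℕ) (z : H), c ^ n * ‖z‖ ≤ ‖(A ^ n) z‖ := by
    intro n
    induction n with
    | zero => intro z; simp
    | succ n ih =>
      intro z
      have h1 : (A ^ (n+1)) z = (A ^ n) (A z) := by rw [pow_succ]; rfl
      rw [h1, pow_succ]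
      have h2 : c * ‖z‖ ≤ ‖A z‖ := hlow z
      have h3 := ih (A z)
      nlinarith [mul_le_mul_of_nonneg_left h2 (pow_pos hc n).le]
  have hpown : ∀ n : ℕ, (0:ℝ) < c ^ n := fun n => pow_pos hc n
  -- ranges are closed
  have hclosed : ∀ n : ℕ, IsClosed ((LinearMap.range ((A ^ n : H →L[ℂ] H) : H →ₗ[ℂ] H) : Submodule ℂ H) : Set H) := by
    intro n
    have hb : ∀ x : H, ‖x‖ ≤ ((⟨(c ^ n)⁻¹, by positivity⟩ : NNReal) : ℝ) * ‖(A ^ n) x‖ := by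
      intro x
      simp only [NNReal.coe_mk]
      rw [inv_mul_eq_div, le_div_iff₀ (hpown n), mul_comm]
      exact hpow n x
    have := ((A ^ n).antilipschitz_of_bound hb).isClosed_range (A ^ n).uniformContinuous
    rw [LinearMap.coe_range]; exact this
  -- monotonicity
  have hstep : ∀ n : ℕ, LinearMap.range ((A ^ (n+1) : H →L[ℂ] H) : H →ₗ[ℂ] H) ≤ LinearMap.range ((A ^ n : H →L[ℂ] H) : H →ₗ[ℂ] H) := by
    rintro n _ ⟨u, rfl⟩
    exact ⟨A u, by rw [pow_succ]; rfl⟩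
  have hmono : ∀ {n m : ℕ}, n ≤ m → LinearMap.range ((A ^ m : H →L[ℂ] H) : H →ₗ[ℂ] H) ≤ LinearMap.range ((A ^ n : H →L[ℂ] H) : H →ₗ[ℂ] H) :=
    fun {n m} h => (antitone_nat_of_succ_le (f := fun n => LinearMap.range ((A ^ n : H →L[ℂ] H) : H →ₗ[ℂ] H)) hstep) h
  have hAmaps : ∀ (n : ℕ) (x : H), x ∈ LinearMap.range ((A ^ n : H →L[ℂ] H) : H →ₗ[ℂ] H) →
      A x ∈ LinearMap.range ((A ^ (n+1) : H →L[ℂ] H) : H →ₗ[ℂ] H) := by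
    rintro n _ ⟨u, rfl⟩
    exact ⟨u, by rw [pow_succ']; rfl⟩
  have hAninj : ∀ n : ℕ, Function.Injective ⇑(A ^ n) := by
    intro n z z' h
    have h2 : (A ^ n) (z - z') = 0 := by rw [map_sub, h, sub_self]
    have := hpow n (z - z')
    rw [h2, norm_zero] at this
    have : ‖z - z'‖ ≤ 0 := by
      by_contra hzz
      push_neg at hzz
      nlinarith [hpown n]
    rw [← sub_eq_zero]
    exact norm_le_zero_iff.mp this
  -- strictness
  have hstrict : ∀ n : ℕ, (A ^ n) y₀ ∈ LinearMap.range ((A ^ n : H →L[ℂ] H) : H →ₗ[ℂ] H) ∧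
      (A ^ n) y₀ ∉ LinearMap.range ((A ^ (n+1) : H →L[ℂ] H) : H →ₗ[ℂ] H) := by
    intro n
    refine ⟨⟨y₀, rfl⟩, ?_⟩
    rintro ⟨u, hu⟩
    have h1 : (A ^ (n+1)) u = (A ^ n) (A u) := by rw [pow_succ]; rfl
    rw [ContinuousLinearMap.coe_coe, h1] at hu
    exact hy' u ((hAninj n hu).symm ▸ rfl)
  -- construct orthonormal-ish sequence
  have hseq : ∀ n : ℕ, ∃ x : H, x ∈ LinearMap.range ((A ^ n : H →L[ℂ] H) : H →ₗ[ℂ] H) ∧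
      x ∈ (LinearMap.range ((A ^ (n+1) : H →L[ℂ] H) : H →ₗ[ℂ] H))ᗮ ∧ ‖x‖ = 1 := by
    intro n
    haveI : CompleteSpace (LinearMap.range ((A ^ (n+1) : H →L[ℂ] H) : H →ₗ[ℂ] H)) := (hclosed (n+1)).completeSpace_coe
    set v : H := (A ^ n) y₀ with hv
    set p : H := (Submodule.orthogonalProjection (LinearMap.range ((A ^ (n+1) : H →L[ℂ] H) : H →ₗ[ℂ] H)) v : H) with hp
    have hpmem : p ∈ LinearMap.range ((A ^ (n+1) : H →L[ℂ] H) : H →ₗ[ℂ] H) := SetLike.coe_mem _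
    have hd : v - p ∈ (LinearMap.range ((A ^ (n+1) : H →L[ℂ] H) : H →ₗ[ℂ] H))ᗮ :=
      Submodule.sub_starProjection_mem_orthogonal v
    have hdne : v - p ≠ 0 := by
      intro h
      rw [sub_eq_zero] at h
      apply (hstrict n).2; show v ∈ _; rw [h]; exact hpmem
    have hdmem : v - p ∈ LinearMap.range ((A ^ n : H →L[ℂ] H) : H →ₗ[ℂ] H) :=
      Submodule.sub_mem _ (hstrict n).1 (hstep n hpmem)
    refine ⟨(‖v - p‖ : ℂ)⁻¹ • (v - p), Submodule.smul_mem _ _ hdmem,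
      Submodule.smul_mem _ _ hd, ?_⟩
    · have hnz : ‖v - p‖ ≠ 0 := norm_ne_zero_iff.mpr hdne
      rw [norm_smul, norm_inv, Complex.norm_real, norm_norm]
      field_simp
  choose x hxmem hxperp hxnorm using hseq
  -- separation of images under K
  have hsep : ∀ n m : ℕ, n < m → 1 ≤ ‖K (x n) - K (x m)‖ := by
    intro n m hnm
    set w : H := A (x n) - A (x m) + x m with hwdef
    have hwmem : w ∈ LinearMap.range ((A ^ (n+1) : H →L[ℂ] H) : H →ₗ[ℂ] H) := by
      apply Submodule.add_mem
      · exact Submodule.sub_mem _ (hAmaps n _ (hxmem n))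
          (hmono (by omega) (hAmaps m _ (hxmem m)))
      · exact hmono (by omega) (hxmem m)
    have hKeq : K (x n) - K (x m) = w - x n := by
      have h1 : ∀ z, K z = A z - z := fun z => by rw [hAz]; abel
      rw [h1, h1, hwdef]; abel
    have hio : (inner ℂ w (x n) : ℂ) = 0 :=
      (Submodule.mem_orthogonal _ _).mp (hxperp n) w hwmem
    have hpyth := @norm_sub_sq ℂ H _ _ _ w (x n)
    rw [hio] at hpyth
    simp only [map_zero, mul_zero, sub_zero, hxnorm, one_pow] at hpyth
    rw [hKeq]
    nlinarith [norm_nonneg (w - x n), sq_nonneg ‖w‖]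
  -- compactness contradiction
  obtain ⟨V, hV, hVc⟩ := (isCompactOperator_iff_exists_mem_nhds_isCompact_closure_image ⇑K).mp hK
  obtain ⟨r, hr, hrV⟩ := Metric.mem_nhds_iff.mp hV
  set w2 : ℕ → H := fun n => ((r/2 : ℝ) : ℂ) • x n with hw2
  have hwV : ∀ n, w2 n ∈ V := by
    intro n
    apply hrV
    rw [Metric.mem_ball, dist_zero_right, hw2]
    simp only [norm_smul, Complex.norm_real, norm_norm, hxnorm, mul_one]
    rw [Real.norm_eq_abs, abs_of_nonneg (by linarith)]
    linarith
  have hmem2 : ∀ n, K (w2 n) ∈ closure (⇑K '' V) := fun n =>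
    subset_closure ⟨w2 n, hwV n, rfl⟩
  obtain ⟨b, -, φ, hφ, hconv⟩ := hVc.tendsto_subseq hmem2
  have hcau : CauchySeq (fun k => K (w2 (φ k))) := hconv.cauchySeq
  obtain ⟨N, hN⟩ := Metric.cauchySeq_iff'.mp hcau (r/2) (by linarith)
  have h1 := hN (N+1) (by omega)
  have h2 : dist (K (w2 (φ (N+1)))) (K (w2 (φ N))) = (r/2) * ‖K (x (φ (N+1))) - K (x (φ N))‖ := by
    rw [dist_eq_norm, hw2]
    simp only [map_smul, ← smul_sub, norm_smul, Complex.norm_real, norm_norm]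
    rw [Real.norm_eq_abs, abs_of_nonneg (by linarith)]
  have h3 : 1 ≤ ‖K (x (φ N)) - K (x (φ (N+1)))‖ := hsep _ _ (hφ (by omega))
  rw [norm_sub_rev] at h3
  rw [h2] at h1
  nlinarith

lemma aux_exists_inverse (K : H →L[ℂ] H) (hK : IsCompactOperator ⇑K)
    (hinj : ∀ z : H, z + K z = 0 → z = 0)
    (hsurj : Function.Surjective ⇑((1 : H →L[ℂ] H) + K)) :
    ∃ S : H →L[ℂ] H, (∀ v : H, S (v + K v) = v) ∧ (∀ v : H, S v + K (S v) = v) := by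
  set A : H →L[ℂ] H := 1 + K with hA
  have hAz : ∀ z, A z = z + K z := fun z => rfl
  have hker : LinearMap.ker (A : H →ₗ[ℂ] H) = ⊥ := by
    rw [LinearMap.ker_eq_bot']
    intro m hm
    exact hinj m (by rw [← hAz]; exact hm)
  have hrange : LinearMap.range (A : H →ₗ[ℂ] H) = ⊤ := LinearMap.range_eq_top.mpr hsurj
  set e := ContinuousLinearEquiv.ofBijective A hker hrange with he
  refine ⟨e.symm.toContinuousLinearMap, fun v => ?_, fun v => ?_⟩
  · have h1 : (v + K v) = e v := by
      rw [← hAz]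
      rw [ContinuousLinearEquiv.coeFn_ofBijective]
    show e.symm (v + K v) = v
    rw [h1, e.symm_apply_apply]
  · show e.symm v + K (e.symm v) = v
    rw [← hAz]
    have := e.apply_symm_apply v
    rwa [show ∀ x, e x = A x from fun x => by rw [ContinuousLinearEquiv.coeFn_ofBijective]] at this

/-- Pointwise convergence of a uniformly Lipschitz family is uniform on compact sets. -/
lemma aux_unif (K : H →L[ℂ] H) (Kn : ℕ → H →L[ℂ] H)
    (hpw : ∀ x : H, Tendsto (fun n => Kn n x) atTop (nhds (K x)))
    {L : ℝ} (hL : 0 < L)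
    (hLip : ∀ (n : ℕ) (x y : H), ‖(K x - Kn n x) - (K y - Kn n y)‖ ≤ L * ‖x - y‖)
    {Q : Set H} (hQ : IsCompact Q) {ε : ℝ} (hε : 0 < ε) :
    ∀ᶠ n in atTop, ∀ y ∈ Q, ‖K y - Kn n y‖ ≤ ε := by
  obtain ⟨t, htQ, htfin, hcover⟩ := hQ.finite_cover_balls (e := ε / (3 * L)) (by positivity)
  have hev : ∀ᶠ n in atTop, ∀ c ∈ t, ‖K c - Kn n c‖ ≤ ε / 3 := by
    rw [eventually_all_finite htfin]
    intro c _
    have h1 := Metric.tendsto_atTop.mp (hpw c) (ε / 3) (by positivity)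
    obtain ⟨N, hN⟩ := h1
    rw [eventually_atTop]
    exact ⟨N, fun n hn => by
      have := hN n hn
      rw [dist_eq_norm] at this
      rw [norm_sub_rev]
      exact this.le⟩
  filter_upwards [hev] with n hn y hy
  obtain ⟨c, hc, hyc⟩ := Set.mem_iUnion₂.mp (hcover hy)
  rw [Metric.mem_ball, dist_eq_norm] at hyc
  have h2 : ‖(K y - Kn n y) - (K c - Kn n c)‖ ≤ L * ‖y - c‖ := hLip n y c
  have h3 : L * ‖y - c‖ ≤ L * (ε / (3 * L)) := by
    apply mul_le_mul_of_nonneg_left hyc.le hL.le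
  have h4 : L * (ε / (3 * L)) = ε / 3 := by field_simp
  calc ‖K y - Kn n y‖ ≤ ‖(K y - Kn n y) - (K c - Kn n c)‖ + ‖K c - Kn n c‖ := by
        have := norm_add_le ((K y - Kn n y) - (K c - Kn n c)) (K c - Kn n c)
        simpa using this
    _ ≤ ε / 3 + ε / 3 := by
        have := hn c hc
        linarith [h2, h3, h4]
    _ ≤ ε := by linarith

end Aux

/-- **Collectively compact operator approximation (Anselone/Kress).**
If `K` is compact with `I + K` injective, `(Kₙ)` converge pointwise to `K`, and the
family `{Kₙ}` is collectively compact (the image of the unit ball under all `Kₙ` is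
relatively compact), then for all large `n` the operator `I + Kₙ` is invertible and
the inverses are uniformly bounded: `‖z‖ ≤ C‖(I + Kₙ)z‖` for all `z`. -/
theorem collectively_compact_invertibility
    {H : Type*} [NormedAddCommGroup H] [InnerProductSpace ℂ H] [CompleteSpace H]
    (K : H →L[ℂ] H) (hK : IsCompactOperator ⇑K)
    (hinj : ∀ z : H, z + K z = 0 → z = 0)
    (Kn : ℕ → H →L[ℂ] H)
    (hpw : ∀ x : H, Tendsto (fun n => Kn n x) atTop (nhds (K x)))
    (hcc : IsCompact (closure {y : H | ∃ n : ℕ, ∃ x : H, ‖x‖ ≤ 1 ∧ Kn n x = y})) :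
    ∃ N : ℕ, ∃ C > (0 : ℝ), ∀ n ≥ N,
      Function.Bijective (fun z : H => z + Kn n z) ∧
      ∀ z : H, ‖z‖ ≤ C * ‖z + Kn n z‖ := by
  obtain ⟨c, hc, hlow⟩ := aux_bounded_below K hK hinj
  obtain ⟨S, hS1, hS2⟩ := aux_exists_inverse K hK hinj (aux_surjective K hK hinj hc hlow)
  set Q : Set H := closure {y : H | ∃ n : ℕ, ∃ x : H, ‖x‖ ≤ 1 ∧ Kn n x = y} with hQdef
  have hbase : {y : H | ∃ n : ℕ, ∃ x : H, ‖x‖ ≤ 1 ∧ Kn n x = y} ⊆ Q := subset_closure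
  obtain ⟨R, hR⟩ := (isBounded_iff_forall_norm_le).mp hcc.isBounded
  have hR0 : 0 ≤ R := by
    have h0 : (0:H) ∈ Q := hbase ⟨0, 0, by simp, by simp⟩
    simpa using hR 0 h0
  -- uniform bound on the Kn
  have hcast : ∀ z : H, ‖((‖z‖:ℝ):ℂ)‖ = ‖z‖ := fun z => by
    rw [Complex.norm_real, norm_norm]
  have hKnR : ∀ (n : ℕ) (x : H), ‖Kn n x‖ ≤ R * ‖x‖ := by
    intro n x
    rcases eq_or_ne x 0 with rfl | hx
    · simp
    · have hnx : (‖x‖:ℂ) ≠ 0 := by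
        simp only [ne_eq, Complex.ofReal_eq_zero, norm_eq_zero]; exact hx
      set xu : H := (‖x‖:ℂ)⁻¹ • x with hxu
      have hyQ : Kn n xu ∈ Q := hbase ⟨n, xu, (aux_norm_unit hx).le, rfl⟩
      have h1 : Kn n x = (‖x‖:ℂ) • Kn n xu := by
        rw [← map_smul, hxu, smul_inv_smul₀ hnx]
      rw [h1, norm_smul, hcast, mul_comm]
      exact mul_le_mul_of_nonneg_right (hR _ hyQ) (norm_nonneg x)
  -- uniform Lipschitz constant
  set L : ℝ := ‖K‖ + R + 1 with hLdef
  have hL0 : 0 < L := by positivity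
  have hLip : ∀ (n : ℕ) (x y : H), ‖(K x - Kn n x) - (K y - Kn n y)‖ ≤ L * ‖x - y‖ := by
    intro n x y
    have h1 : (K x - Kn n x) - (K y - Kn n y) = K (x - y) - Kn n (x - y) := by
      rw [map_sub, map_sub]; abel
    rw [h1]
    calc ‖K (x - y) - Kn n (x - y)‖ ≤ ‖K (x - y)‖ + ‖Kn n (x - y)‖ := norm_sub_le _ _
      _ ≤ ‖K‖ * ‖x - y‖ + R * ‖x - y‖ := add_le_add (K.le_opNorm _) (hKnR n _)
      _ ≤ L * ‖x - y‖ := by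
          rw [hLdef]
          nlinarith [norm_nonneg (x - y)]
  set ε₁ : ℝ := 1 / (2 * (‖S‖ + 1)) with hε₁def
  have hε₁ : 0 < ε₁ := by positivity
  have ev1 := aux_unif K Kn hpw hL0 hLip hcc hε₁
  have hQ2 : IsCompact (⇑S '' Q) := hcc.image S.continuous
  have ev2 := aux_unif K Kn hpw hL0 hLip hQ2 (ε := 1/2) (by norm_num)
  obtain ⟨N, hN⟩ := eventually_atTop.mp (ev1.and ev2)
  set C : ℝ := 2 * (1 + ‖S‖ * R) with hCdef
  have hC : 0 < C := by positivity
  refine ⟨N, C, hC, fun n hn => ?_⟩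
  obtain ⟨hQ1n, hQ2n⟩ := hN n hn
  -- key pointwise smallness bounds
  have hEn : ∀ z : H, ‖S (K (Kn n z) - Kn n (Kn n z))‖ ≤ 1/2 * ‖z‖ := by
    intro z
    rcases eq_or_ne z 0 with rfl | hz
    · simp
    · have hnz : (‖z‖:ℂ) ≠ 0 := by
        simp only [ne_eq, Complex.ofReal_eq_zero, norm_eq_zero]; exact hz
      set xu : H := (‖z‖:ℂ)⁻¹ • z with hxu
      set y : H := Kn n xu with hy
      have hyQ : y ∈ Q := hbase ⟨n, xu, (aux_norm_unit hz).le, rfl⟩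
      have h1 : Kn n z = (‖z‖:ℂ) • y := by
        rw [hy, ← map_smul, hxu, smul_inv_smul₀ hnz]
      have h2 : K (Kn n z) - Kn n (Kn n z) = (‖z‖:ℂ) • (K y - Kn n y) := by
        rw [h1, map_smul, map_smul, smul_sub]
      rw [h2, map_smul, norm_smul, hcast]
      have h3 : ‖S (K y - Kn n y)‖ ≤ ‖S‖ * ε₁ :=
        (S.le_opNorm _).trans (mul_le_mul_of_nonneg_left (hQ1n y hyQ) (norm_nonneg S))
      have h4 : ‖S‖ * ε₁ ≤ 1/2 := by
        rw [hε₁def, mul_one_div, div_le_iff₀ (by positivity)]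
        nlinarith [norm_nonneg S]
      rw [mul_comm]
      exact mul_le_mul_of_nonneg_right (h3.trans h4) (norm_nonneg z)
  have hFn : ∀ w : H, ‖K (S (Kn n w)) - Kn n (S (Kn n w))‖ ≤ 1/2 * ‖w‖ := by
    intro w
    rcases eq_or_ne w 0 with rfl | hw
    · simp
    · have hnw : (‖w‖:ℂ) ≠ 0 := by
        simp only [ne_eq, Complex.ofReal_eq_zero, norm_eq_zero]; exact hw
      set xu : H := (‖w‖:ℂ)⁻¹ • w with hxu
      set y : H := Kn n xu with hy
      have hyQ : y ∈ Q := hbase ⟨n, xu, (aux_norm_unit hw).le, rfl⟩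
      have hSyQ2 : S y ∈ ⇑S '' Q := ⟨y, hyQ, rfl⟩
      have h1 : Kn n w = (‖w‖:ℂ) • y := by
        rw [hy, ← map_smul, hxu, smul_inv_smul₀ hnw]
      have h2 : K (S (Kn n w)) - Kn n (S (Kn n w)) = (‖w‖:ℂ) • (K (S y) - Kn n (S y)) := by
        rw [h1, map_smul, map_smul, map_smul, smul_sub]
      rw [h2, norm_smul, hcast, mul_comm]
      exact mul_le_mul_of_nonneg_right (hQ2n (S y) hSyQ2) (norm_nonneg w)
  -- identity 1
  have hid1 : ∀ z : H, (z + Kn n z) - S (Kn n (z + Kn n z))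
      = z + S (K (Kn n z) - Kn n (Kn n z)) := by
    intro z
    have h := hS1 (Kn n z)
    rw [map_add] at h
    have h' : S (K (Kn n z)) = Kn n z - S (Kn n z) := eq_sub_of_add_eq' h
    rw [map_add (Kn n), map_add S, map_sub S, h']
    abel
  -- the uniform bound
  have hbound : ∀ z : H, ‖z‖ ≤ C * ‖z + Kn n z‖ := by
    intro z
    set v : H := z + Kn n z with hv
    have h1 := hid1 z
    have h2 : ‖z‖ ≤ ‖z + S (K (Kn n z) - Kn n (Kn n z))‖ + ‖S (K (Kn n z) - Kn n (Kn n z))‖ := by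
      have := norm_sub_le (z + S (K (Kn n z) - Kn n (Kn n z))) (S (K (Kn n z) - Kn n (Kn n z)))
      simpa using this
    rw [← h1] at h2
    have h4 : ‖v - S (Kn n v)‖ ≤ ‖v‖ + ‖S‖ * (R * ‖v‖) := by
      calc ‖v - S (Kn n v)‖ ≤ ‖v‖ + ‖S (Kn n v)‖ := norm_sub_le _ _
        _ ≤ ‖v‖ + ‖S‖ * (R * ‖v‖) := by
            have := (S.le_opNorm (Kn n v)).trans
              (mul_le_mul_of_nonneg_left (hKnR n v) (norm_nonneg S))
            linarith
    have h5 := hEn z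
    rw [hCdef]
    nlinarith [norm_nonneg v, norm_nonneg (S : H →L[ℂ] H), norm_nonneg z]
  refine ⟨⟨?_, ?_⟩, hbound⟩
  · intro z z' hzz
    simp only at hzz
    have h0 : (z - z') + Kn n (z - z') = 0 := by
      rw [map_sub]
      rw [← sub_eq_zero] at hzz
      calc z - z' + (Kn n z - Kn n z') = (z + Kn n z) - (z' + Kn n z') := by abel
        _ = 0 := hzz
    have hb := hbound (z - z')
    rw [h0, norm_zero, mul_zero] at hb
    exact sub_eq_zero.mp (norm_le_zero_iff.mp hb)
  · intro y
    set Fop : H →L[ℂ] H := (K - Kn n).comp (S.comp (Kn n)) with hFop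
    have hFopz : ∀ w : H, Fop w = K (S (Kn n w)) - Kn n (S (Kn n w)) := fun w => rfl
    have hFopnorm : ‖Fop‖ ≤ 1/2 :=
      Fop.opNorm_le_bound (by norm_num) (fun w => by rw [hFopz]; exact hFn w)
    have hlt : ‖-Fop‖ < 1 := by rw [norm_neg]; linarith
    set u : (H →L[ℂ] H)ˣ := Units.oneSub (-Fop) hlt with hu
    set w : H := (↑u⁻¹ : H →L[ℂ] H) y with hwdef
    have hweq : w + Fop w = y := by
      have h0 : (↑u * ↑u⁻¹ : H →L[ℂ] H) y = y := by rw [u.mul_inv]; rfl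
      have h1 : (↑u : H →L[ℂ] H) w = y := h0
      rw [hu, Units.val_oneSub] at h1
      have h2 : (1 - -Fop : H →L[ℂ] H) w = w + Fop w := by
        rw [sub_neg_eq_add]; rfl
      rw [h2] at h1
      exact h1
    refine ⟨w - S (Kn n w), ?_⟩
    show (w - S (Kn n w)) + Kn n (w - S (Kn n w)) = y
    have h2 := hS2 (Kn n w)
    have h2' : K (S (Kn n w)) = Kn n w - S (Kn n w) := eq_sub_of_add_eq' h2
    rw [map_sub (Kn n), ← hweq, hFopz, h2']
    abel
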